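/- Let a₁, a₂, w_s, u₀ ∈ ℝ with a₁a₂ ≠ 0, a₁² ≠ a₂², w_s ≠ 0 and u₀ ≠ 0, and suppose that a₁u₀ + a₂/u₀ = w_s and a₁/u₀ + a₂u₀ = −1/w_s. Then u₀ = (w_s a₁ + a₂/w_s)/(a₁² − a₂²), and moreover (a₁² − a₂²)² + a₁² + a₂² + a₁a₂(w_s² + 1/w_s²) = 0. -/

import Mathlib

theorem stmt_2 (a₁ a₂ ws u₀ : ℝ)
    (h1 : a₁ * a₂ ≠ 0) (h2 : a₁ ^ 2 ≠ a₂ ^ 2) (h3 : ws ≠ 0) (h4 : u₀ ≠ 0)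
    (h5 : a₁ * u₀ + a₂ / u₀ = ws) (h6 : a₁ / u₀ + a₂ * u₀ = -1 / ws) :
    u₀ = (ws * a₁ + a₂ / ws) / (a₁ ^ 2 - a₂ ^ 2) ∧
    (a₁ ^ 2 - a₂ ^ 2) ^ 2 + a₁ ^ 2 + a₂ ^ 2 + a₁ * a₂ * (ws ^ 2 + 1 / ws ^ 2) = 0 := by
  have hd : a₁ ^ 2 - a₂ ^ 2 ≠ 0 := sub_ne_zero.mpr h2
  have ha2 : a₂ ≠ 0 := fun h => h1 (by simp [h])
  field_simp at h5 h6 ⊢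
  have e1 : u₀ * (ws * (a₁ ^ 2 - a₂ ^ 2)) = ws * a₁ * ws + a₂ := by
    have e1' : u₀ * (u₀ * (ws * (a₁ ^ 2 - a₂ ^ 2))) = u₀ * (ws * a₁ * ws + a₂) := by
      linear_combination (a₁*ws)*h5 - a₂*h6
    exact mul_left_cancel₀ h4 e1'
  refine ⟨by linear_combination e1, ?_⟩
  have e2 : a₂ * (((a₁ ^ 2 - a₂ ^ 2) ^ 2 + a₁ ^ 2 + a₂ ^ 2) * ws ^ 2 +
      a₁ * a₂ * (ws ^ 2 * ws ^ 2 + 1)) = a₂ * 0 := by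
    rw [mul_zero]
    linear_combination (ws^2*(a₁^2-a₂^2)^2) * h5
      - (a₁*(ws*(a₁^2-a₂^2)*u₀ + a₁*ws^2 + a₂) - ws^2*(a₁^2-a₂^2)) * e1
  exact mul_left_cancel₀ ha2 (by linear_combination e2)
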